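/- Let B be a small category, G = Set^B, I a finite directed multigraph, D : I → G a diagram, and κ : D ⇒ ΔS a colimiting cocone. If I contains a directed cycle p = (i₀ →^{d₀} i₁ →^{d₁} … →^{d_{n−1}} i_n = i₀) and for some X ∈ B the set D_{i₀}(X) is finite and non-empty, then κ is not a Van Kampen cocone: there exist y ∈ D_{i₀}(X) and k ≥ 1 with D_p^k(y) = y (where D_p = D_{d_{n−1}} ∘ … ∘ D_{d₀}), giving a non-empty proper mapping path of sort X connecting y with itself, which together with the empty path gives two different proper mapping paths from y to y. -/

import Mathlib

open CategoryTheory CategoryTheory.Limits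

universe u

/-- A directed multigraph. -/
structure MGraph : Type (u + 1) where
  V : Type u
  E : Type u
  s : E → V
  t : E → V

/-- A diagram of shape a directed multigraph `I` in a category `C`
(a graph morphism into the underlying graph of `C`). -/
structure GDiagram (I : MGraph.{u}) (C : Type*) [Category C] where
  obj : I.V → C
  map : (e : I.E) → obj (I.s e) ⟶ obj (I.t e)

section Core

variable {I : MGraph.{u}} {C : Type*} [Category C]

/-- A natural transformation between diagrams of shape `I`. -/
@[ext]
structure GHom (F G : GDiagram I C) where
  app : (i : I.V) → F.obj i ⟶ G.obj i
  naturality : ∀ e : I.E, F.map e ≫ app (I.t e) = app (I.s e) ≫ G.map e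

/-- A transformation is cartesian if all its naturality squares are pullbacks. -/
def GHom.Cartesian {F G : GDiagram I C} (τ : GHom F G) : Prop :=
  ∀ e : I.E, IsPullback (F.map e) (τ.app (I.s e)) (τ.app (I.t e)) (G.map e)

/-- An object of the category `C^I ⇓ D` of cartesian transformations into `D`. -/
structure CartObj (D : GDiagram I C) where
  diag : GDiagram I C
  hom : GHom diag D
  cart : hom.Cartesian

instance cartObjCategory (D : GDiagram I C) : Category (CartObj D) where
  Hom A B := { φ : GHom A.diag B.diag // ∀ i, φ.app i ≫ B.hom.app i = A.hom.app i }
  id A := ⟨⟨fun _ => 𝟙 _, fun e => by simp⟩, fun i => by simp⟩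
  comp {A B C'} φ ψ :=
    ⟨⟨fun i => φ.1.app i ≫ ψ.1.app i, fun e => by
        rw [← Category.assoc, φ.1.naturality, Category.assoc, ψ.1.naturality, ← Category.assoc]⟩,
      fun i => by rw [Category.assoc, ψ.2 i, φ.2 i]⟩
  id_comp f := Subtype.ext (GHom.ext (funext fun i => Category.id_comp _))
  comp_id f := Subtype.ext (GHom.ext (funext fun i => Category.comp_id _))
  assoc f g h := Subtype.ext (GHom.ext (funext fun i => Category.assoc _ _ _))

/-- A commutative cocone under a diagram of shape `I`. -/
structure GCocone (D : GDiagram I C) where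
  pt : C
  leg : (i : I.V) → D.obj i ⟶ pt
  comm : ∀ e : I.E, D.map e ≫ leg (I.t e) = leg (I.s e)

/-- A cocone is colimiting if every cocone factors uniquely through it. -/
def GCocone.IsColimit {D : GDiagram I C} (c : GCocone D) : Prop :=
  ∀ c' : GCocone D, ∃! f : c.pt ⟶ c'.pt, ∀ i, c.leg i ≫ f = c'.leg i

/-- The Van Kampen property of a cocone `c`: the functor `κ*`, given by pulling back
objects of the slice category over the apex along all the cocone legs, is an
equivalence between the slice category and the category of cartesian natural
transformations into `D`.  (We phrase this as: there is an equivalence `F` which is,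
objectwise and morphismwise, given by pullback along the legs.) -/
def GCocone.IsVanKampen {D : GDiagram I C} (c : GCocone D) : Prop :=
  ∃ (F : Over c.pt ⥤ CartObj D)
    (π : (σ : Over c.pt) → (i : I.V) → ((F.obj σ).diag.obj i ⟶ σ.left)),
    (∀ (σ : Over c.pt) (i : I.V),
        IsPullback (π σ i) ((F.obj σ).hom.app i) σ.hom (c.leg i)) ∧
    (∀ {σ σ' : Over c.pt} (γ : σ ⟶ σ') (i : I.V),
        ((F.map γ).1.app i) ≫ π σ' i = π σ i ≫ γ.left) ∧
    F.IsEquivalence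

end Core
section Paths

variable {B : Type u} [SmallCategory B] {I : MGraph.{u}}

/-- An element of some component of the diagram `D`, at sort `X`
(the components are regarded as disjoint, so each element is tagged with its index). -/
def Elt (D : GDiagram I (B ⥤ Type u)) (X : B) : Type u :=
  Σ i : I.V, (D.obj i).obj X

/-- A path segment of sort `X` in the diagram `D`: a triple `(y, δ, y')` with
`δ` an edge (`fwd`) or a formally reversed edge (`bwd`) of the shape graph. -/
inductive Seg (D : GDiagram I (B ⥤ Type u)) (X : B) : Type u
  | fwd (d : I.E) (y : (D.obj (I.s d)).obj X)
  | bwd (d : I.E) (y : (D.obj (I.s d)).obj X)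

namespace Seg

variable {D : GDiagram I (B ⥤ Type u)} {X : B}

/-- The first component of a path segment. -/
def src : Seg D X → Elt D X
  | fwd d y => ⟨I.s d, y⟩
  | bwd d y => ⟨I.t d, (D.map d).app X y⟩

/-- The third component of a path segment. -/
def tgt : Seg D X → Elt D X
  | fwd d y => ⟨I.t d, (D.map d).app X y⟩
  | bwd d y => ⟨I.s d, y⟩

/-- The reversed segment: `(y, δ, y') ↦ (y', δᵒᵖ, y)`. -/
def rev : Seg D X → Seg D X
  | fwd d y => bwd d y
  | bwd d y => fwd d y

/-- Two segments are weakly equal if they are equal or each is the reverse of the other. -/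
def WeaklyEq (a b : Seg D X) : Prop := a = b ∨ a = b.rev

end Seg

variable {D : GDiagram I (B ⥤ Type u)} {X : B}

/-- `p` is a mapping path of sort `X` connecting `z` with `z'`:  a finite sequence of
path segments in which consecutive segments share endpoints, starting at `z` and
ending at `z'`; the empty path connects each element with itself. -/
def IsMPath (p : List (Seg D X)) (z z' : Elt D X) : Prop :=
  p.Chain' (fun a b => a.tgt = b.src) ∧
  (p = [] → z = z') ∧
  ∀ h : p ≠ [], (p.head h).src = z ∧ (p.getLast h).tgt = z'

/-- A mapping path is proper if no two distinct segments of it are weakly equal. -/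
def ProperPath (p : List (Seg D X)) : Prop :=
  p.Pairwise (fun a b => ¬ Seg.WeaklyEq a b)

/-- Two mapping paths are disjoint if no segment of one is weakly equal to a segment
of the other. -/
def DisjointPaths (p q : List (Seg D X)) : Prop :=
  ∀ a ∈ p, ∀ b ∈ q, ¬ Seg.WeaklyEq a b

/-- A mapping path `p` starting at `z` is inner-cycle free if `yᵢ ≠ yⱼ` for all
`0 ≤ i < j ≤ n` with `j - i ≤ n - 1`, where `y₀ = z, y₁, …, yₙ` is the sequence of
elements visited by the path. -/
def InnerCycleFree (p : List (Seg D X)) (z : Elt D X) : Prop :=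
  ∀ (i j : ℕ), (_ : i < j) → (_ : j ≤ p.length) → j - i ≤ p.length - 1 →
    (z :: p.map Seg.tgt).get ⟨i, by simp only [List.length_cons, List.length_map]; omega⟩ ≠
    (z :: p.map Seg.tgt).get ⟨j, by simp only [List.length_cons, List.length_map]; omega⟩

end Paths
section GraphNotions

/-- The cyclic successor of `j : Fin n`. -/
def fcsucc {n : ℕ} (hn : 0 < n) (j : Fin n) : Fin n := ⟨(j.1 + 1) % n, Nat.mod_lt _ hn⟩

/-- `IsEdgeSeq I l i j` : `l` is a sequence of edges of `I` leading from `i` to `j`. -/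
def IsEdgeSeq (I : MGraph.{u}) : List I.E → I.V → I.V → Prop
  | [], i, j => i = j
  | e :: l, i, j => I.s e = i ∧ IsEdgeSeq I l (I.t e) j

/-- A vertex is minimal if it has no outgoing edges. -/
def MGraph.Minimal (I : MGraph.{u}) (i : I.V) : Prop := ∀ e : I.E, I.s e ≠ i

/-- A vertex is branching if it has at least two outgoing edges. -/
def MGraph.Branching (I : MGraph.{u}) (i : I.V) : Prop :=
  ∃ e e' : I.E, e ≠ e' ∧ I.s e = i ∧ I.s e' = i

/-- A branch is a nonempty edge sequence from a branching vertex to a minimal vertex. -/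
def IsBranch (I : MGraph.{u}) (p : List I.E) (i j : I.V) : Prop :=
  I.Branching i ∧ I.Minimal j ∧ p ≠ [] ∧ IsEdgeSeq I p i j

/-- A minimal vertex is affected if it is the target of some branch. -/
def MGraph.Affected (I : MGraph.{u}) (j : I.V) : Prop := ∃ p i, IsBranch I p i j

/-- A directed cycle: pairwise distinct edges `d₀, …, d_{n-1}` (`n ≥ 1`) with
`t(d_{k-1}) = s(d_{k mod n})`. -/
def MGraph.HasDirectedCycle (I : MGraph.{u}) : Prop :=
  ∃ (n : ℕ) (hn : 1 ≤ n) (d : Fin n → I.E), Function.Injective d ∧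
    ∀ k : Fin n, I.t (d k) = I.s (d (fcsucc (by omega) k))

/-- The set of endpoints of an edge. -/
def MGraph.ends (I : MGraph.{u}) (e : I.E) : Set I.V := {I.s e, I.t e}

/-- An undirected cycle: pairwise distinct edges `d₀, …, d_{n-1}` (`n ≥ 2`) such that
cyclically consecutive edges share an endpoint. -/
def IsUndirectedCycle (I : MGraph.{u}) {n : ℕ} (hn : 2 ≤ n) (d : Fin n → I.E) : Prop :=
  Function.Injective d ∧
    ∀ k : Fin n, (I.ends (d k) ∩ I.ends (d (fcsucc (by omega) k))).Nonempty

variable {B : Type u} [SmallCategory B] {I : MGraph.{u}}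

/-- `Evals D X l z w` : applying, at sort `X`, the composite of the maps `D_d` along
the edge sequence `l` to the element `z` yields the element `w`. -/
inductive Evals (D : GDiagram I (B ⥤ Type u)) (X : B) :
    List I.E → Elt D X → Elt D X → Prop
  | nil (z : Elt D X) : Evals D X [] z z
  | cons (e : I.E) (y : (D.obj (I.s e)).obj X) {l : List I.E} {w : Elt D X} :
      Evals D X l ⟨I.t e, (D.map e).app X y⟩ w → Evals D X (e :: l) ⟨I.s e, y⟩ w

/-- `D` is image-disjoint: for each pair of different branches `p, p'` starting at the
same branching vertex `i` and every `y ∈ D_i(X)`, we have `D_p(y) ≠ D_{p'}(y)`. -/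
def ImageDisjoint (D : GDiagram I (B ⥤ Type u)) : Prop :=
  ∀ (i j j' : I.V) (p p' : List I.E), IsBranch I p i j → IsBranch I p' i j' → p ≠ p' →
    ∀ (X : B) (y : (D.obj i).obj X) (w w' : Elt D X),
      Evals D X p ⟨i, y⟩ w → Evals D X p' ⟨i, y⟩ w' → w ≠ w'

end GraphNotions

/-! ### Auxiliary machinery -/

section AuxPaths

variable {B : Type u} [SmallCategory B] {I : MGraph.{u}}
variable (D : GDiagram I (B ⥤ Type u)) (X : B)

open Classical in
/-- One step of running the diagram along an edge, at the level of `Elt`. -/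
noncomputable def stepE (z : Elt D X) (e : I.E) : Elt D X :=
  if h : z.1 = I.s e then
    ⟨I.t e, (D.map e).app X (cast (congrArg (fun v => (D.obj v).obj X) h) z.2)⟩
  else z

/-- Running the diagram along a list of edges. -/
noncomputable def runE (l : List I.E) (z : Elt D X) : Elt D X :=
  l.foldl (stepE D X) z

variable {D X}

@[simp] lemma stepE_eq (e : I.E) (y : (D.obj (I.s e)).obj X) :
    stepE D X ⟨I.s e, y⟩ e = ⟨I.t e, (D.map e).app X y⟩ := by
  simp [stepE]; rfl

@[simp] lemma runE_nil (z : Elt D X) : runE D X [] z = z := rfl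

lemma runE_cons (e : I.E) (l : List I.E) (z : Elt D X) :
    runE D X (e :: l) z = runE D X l (stepE D X z e) := rfl

lemma runE_append (l l' : List I.E) (z : Elt D X) :
    runE D X (l ++ l') z = runE D X l' (runE D X l z) :=
  List.foldl_append ..

lemma isEdgeSeq_append {l l' : List I.E} {a b c : I.V}
    (h : IsEdgeSeq I l a b) (h' : IsEdgeSeq I l' b c) : IsEdgeSeq I (l ++ l') a c := by
  induction l generalizing a with
  | nil => cases h; simpa using h'
  | cons e l ih => exact ⟨h.1, ih h.2⟩

lemma runE_spec {l : List I.E} {a b : I.V} (h : IsEdgeSeq I l a b)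
    {z : Elt D X} (hz : z.1 = a) :
    (runE D X l z).1 = b ∧ Evals D X l z (runE D X l z) := by
  induction l generalizing a z with
  | nil => cases h; exact ⟨hz, Evals.nil z⟩
  | cons e l ih =>
    obtain ⟨he, hseq⟩ := h
    obtain ⟨j, y⟩ := z
    cases hz; cases he
    erw [runE_cons, stepE_eq]
    obtain ⟨h1, h2⟩ := ih hseq (z := ⟨I.t e, (D.map e).app X y⟩) rfl
    exact ⟨h1, Evals.cons e y h2⟩

end AuxPaths

section AuxPath2

variable {B : Type u} [SmallCategory B] {I : MGraph.{u}}
variable {D : GDiagram I (B ⥤ Type u)} {X : B}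

/-- The edge underlying a path segment. -/
def Seg.edge : Seg D X → I.E
  | .fwd d _ => d
  | .bwd d _ => d

open Classical in
/-- The forward mapping path obtained by running along a list of edges. -/
noncomputable def segsOf (D : GDiagram I (B ⥤ Type u)) (X : B) :
    List I.E → Elt D X → List (Seg D X)
  | [], _ => []
  | e :: l, z =>
    if h : z.1 = I.s e then
      Seg.fwd e (cast (congrArg (fun v => (D.obj v).obj X) h) z.2) :: segsOf D X l (stepE D X z e)
    else []

@[simp] lemma segsOf_nil (z : Elt D X) : segsOf D X [] z = [] := rfl

lemma segsOf_cons (e : I.E) (l : List I.E) (y : (D.obj (I.s e)).obj X) :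
    segsOf D X (e :: l) ⟨I.s e, y⟩ =
      Seg.fwd e y :: segsOf D X l ⟨I.t e, (D.map e).app X y⟩ := by
  erw [segsOf.eq_2, dif_pos rfl, stepE_eq]
  simp

lemma segsOf_length {l : List I.E} {z w : Elt D X} (h : Evals D X l z w) :
    (segsOf D X l z).length = l.length := by
  induction h with
  | nil => rfl
  | cons e y h ih => rw [segsOf_cons]; simpa using ih

lemma segsOf_ne_nil {l : List I.E} {z w : Elt D X} (h : Evals D X l z w) (hl : l ≠ []) :
    segsOf D X l z ≠ [] := by
  cases h with
  | nil => exact absurd rfl hl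
  | cons e y h => rw [segsOf_cons]; simp

lemma segsOf_fwd {l : List I.E} {z w : Elt D X} (h : Evals D X l z w) :
    ∀ x ∈ segsOf D X l z, ∃ e y, x = Seg.fwd e y := by
  induction h with
  | nil => simp
  | cons e y h ih =>
    rw [segsOf_cons]
    intro x hx
    rcases List.mem_cons.1 hx with hx | hx
    · exact ⟨e, y, hx⟩
    · exact ih x hx

lemma segsOf_head?_src {l : List I.E} {z w : Elt D X} (h : Evals D X l z w) :
    ∀ b ∈ (segsOf D X l z).head?, b.src = z := by
  cases h with
  | nil => simp
  | cons e y h => rw [segsOf_cons]; simp [Seg.src]; rfl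

lemma segsOf_head_src {l : List I.E} {z w : Elt D X} (h : Evals D X l z w)
    (hne : segsOf D X l z ≠ []) : (List.head (segsOf D X l z) hne).src = z :=
  segsOf_head?_src h _ (by rw [List.head?_eq_head hne]; rfl)

lemma segsOf_last_tgt {l : List I.E} {z w : Elt D X} (h : Evals D X l z w)
    (hne : segsOf D X l z ≠ []) : (List.getLast (segsOf D X l z) hne).tgt = w := by
  induction h with
  | nil => exact absurd rfl hne
  | @cons e y l w h ih =>
    revert hne
    rw [segsOf_cons]
    intro hne
    by_cases h0 : segsOf D X l ⟨I.t e, (D.map e).app X y⟩ = []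
    · have hl : l = [] := by
        have hlen := segsOf_length h
        rw [h0] at hlen
        exact List.length_eq_zero_iff.mp hlen.symm
      subst hl
      cases h
      simp [Seg.tgt]; rfl
    · rw [List.getLast_cons h0]
      exact ih h0

lemma segsOf_chain {l : List I.E} {z w : Elt D X} (h : Evals D X l z w) :
    (segsOf D X l z).Chain' (fun a b => a.tgt = b.src) := by
  induction h with
  | nil => exact List.isChain_nil
  | cons e y h ih =>
    rw [segsOf_cons]; unfold List.Chain'; rw [List.isChain_cons]
    refine ⟨?_, ih⟩
    intro b hb
    rw [segsOf_head?_src h b hb]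
    rfl

lemma segsOf_isMPath {l : List I.E} {z w : Elt D X} (h : Evals D X l z w) :
    IsMPath (segsOf D X l z) z w := by
  refine ⟨segsOf_chain h, ?_, ?_⟩
  · intro hp
    cases h with
    | nil => rfl
    | cons e y h => rw [segsOf_cons] at hp; simp at hp
  · intro hp
    exact ⟨segsOf_head_src h hp, segsOf_last_tgt h hp⟩

lemma properPath_of_nodup {p : List (Seg D X)} (hnd : p.Nodup)
    (hf : ∀ x ∈ p, ∃ e y, x = Seg.fwd e y) : ProperPath p := by
  refine List.Pairwise.imp_of_mem ?_ hnd
  intro a b ha hb hne hweq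
  obtain ⟨e, y, rfl⟩ := hf a ha
  obtain ⟨e', y', rfl⟩ := hf b hb
  rcases hweq with h | h
  · exact hne h
  · simp [Seg.rev, Seg.WeaklyEq] at h

lemma segsOf_get {l : List I.E} {z w : Elt D X} (h : Evals D X l z w) :
    ∀ (t : ℕ) (ht : t < l.length),
      ((segsOf D X l z).get ⟨t, by rw [segsOf_length h]; exact ht⟩).edge = l.get ⟨t, ht⟩ ∧
      ((segsOf D X l z).get ⟨t, by rw [segsOf_length h]; exact ht⟩).src
        = runE D X (l.take t) z := by
  induction h with
  | nil => intro t ht; simp at ht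
  | cons e y h ih =>
    intro t ht
    cases t with
    | zero =>
      constructor
      · simp [segsOf_cons, Seg.edge]
      · simp [segsOf_cons, Seg.src]; rfl
    | succ t =>
      have ht' : t < _ := Nat.lt_of_succ_lt_succ (by simpa using ht)
      obtain ⟨h1, h2⟩ := ih t ht'
      constructor
      · simpa [segsOf_cons] using h1
      · erw [List.take_succ_cons, runE_cons, stepE_eq]
        simpa [segsOf_cons] using h2

end AuxPath2

section AuxCycle

variable {I : MGraph.{u}}

lemma isEdgeSeq_ofFn_aux {n : ℕ} (hn : 1 ≤ n) (d : Fin n → I.E)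
    (hcyc : ∀ k : Fin n, I.t (d k) = I.s (d (fcsucc (by omega) k))) :
    ∀ (k j : ℕ) (hj : j ≤ n), n - j = k →
      IsEdgeSeq I ((List.ofFn d).drop j)
        (if h : j < n then I.s (d ⟨j, h⟩) else I.s (d ⟨0, by omega⟩))
        (I.s (d ⟨0, by omega⟩)) := by
  intro k
  induction k with
  | zero =>
    intro j hj hk
    have hj' : j = n := by omega
    subst hj'
    rw [dif_neg (by omega)]
    rw [List.drop_eq_nil_of_le (by simp)]
    rfl
  | succ k ih =>
    intro j hj hk
    have hjn : j < n := by omega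
    rw [dif_pos hjn]
    rw [List.drop_eq_getElem_cons (by simpa using hjn)]
    refine ⟨by simp, ?_⟩
    have h1 : I.t ((List.ofFn d)[j]'(by simpa using hjn)) =
        I.s (d ⟨(j + 1) % n, Nat.mod_lt _ (by omega)⟩) := by
      rw [List.getElem_ofFn]
      exact hcyc ⟨j, hjn⟩
    rw [h1]
    have h2 := ih (j + 1) (by omega) (by omega)
    by_cases hj1 : j + 1 < n
    · rw [dif_pos hj1] at h2
      have : (⟨(j + 1) % n, Nat.mod_lt _ (by omega)⟩ : Fin n) = ⟨j + 1, hj1⟩ :=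
        Fin.ext (Nat.mod_eq_of_lt hj1)
      rw [this]
      exact h2
    · have hj1' : j + 1 = n := by omega
      rw [dif_neg (by omega)] at h2
      have : (⟨(j + 1) % n, Nat.mod_lt _ (by omega)⟩ : Fin n) = ⟨0, by omega⟩ :=
        Fin.ext (by simp [hj1'])
      rw [this]
      exact h2

lemma isEdgeSeq_ofFn {n : ℕ} (hn : 1 ≤ n) (d : Fin n → I.E)
    (hcyc : ∀ k : Fin n, I.t (d k) = I.s (d (fcsucc (by omega) k))) :
    IsEdgeSeq I (List.ofFn d) (I.s (d ⟨0, by omega⟩)) (I.s (d ⟨0, by omega⟩)) := by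
  have := isEdgeSeq_ofFn_aux hn d hcyc n 0 (by omega) (by omega)
  rw [dif_pos (by omega)] at this
  simpa using this

lemma isEdgeSeq_flatten_replicate {L : List I.E} {a : I.V} (h : IsEdgeSeq I L a a) :
    ∀ k : ℕ, IsEdgeSeq I ((List.replicate k L).flatten) a a := by
  intro k
  induction k with
  | zero => rfl
  | succ k ih =>
    rw [List.replicate_succ, List.flatten_cons]
    exact isEdgeSeq_append h ih

lemma length_flatten_replicate {α : Type*} (k : ℕ) (L : List α) :
    ((List.replicate k L).flatten).length = k * L.length := by
  induction k with
  | zero => simp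
  | succ k ih => rw [List.replicate_succ, List.flatten_cons]; simp [ih, Nat.succ_mul]; ring

lemma take_flatten_replicate {α : Type*} (L : List α) :
    ∀ (q k j : ℕ), q < k → j ≤ L.length →
      ((List.replicate k L).flatten).take (q * L.length + j) =
        (List.replicate q L).flatten ++ L.take j := by
  intro q
  induction q with
  | zero =>
    intro k j hk hj
    cases k with
    | zero => omega
    | succ k =>
      rw [List.replicate_succ, List.flatten_cons]
      simp [List.take_append_of_le_length hj]
  | succ q ih =>
    intro k j hk hj
    cases k with
    | zero => omega
    | succ k =>
      rw [List.replicate_succ, List.flatten_cons, List.take_append,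
        List.take_of_length_le (by nlinarith [Nat.succ_mul q L.length]),
        List.replicate_succ, List.flatten_cons]
      have harith : (q + 1) * L.length + j - L.length = q * L.length + j := by
        rw [Nat.succ_mul]; omega
      rw [harith, ih k j (by omega) hj, List.append_assoc]

lemma getElem_flatten_replicate {α : Type*} (L : List α) (hL : L ≠ []) :
    ∀ (k t : ℕ) (ht : t < k * L.length),
      ((List.replicate k L).flatten)[t]'(by rw [length_flatten_replicate]; exact ht) =
        L[t % L.length]'(Nat.mod_lt _ (List.length_pos_iff.mpr hL)) := by
  intro k
  induction k with
  | zero => intro t ht; omega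
  | succ k ih =>
    intro t ht
    have e1 : (List.replicate (k + 1) L).flatten = L ++ (List.replicate k L).flatten := by
      rw [List.replicate_succ, List.flatten_cons]
    rw [List.getElem_of_eq e1]
    by_cases h : t < L.length
    · rw [List.getElem_append_left (by simpa using h)]
      congr 1
      exact (Nat.mod_eq_of_lt h).symm
    · push_neg at h
      rw [List.getElem_append_right (by simpa using h)]
      have h2 : t - L.length < k * L.length := by
        have hs : (k + 1) * L.length = k * L.length + L.length := by ring
        omega
      rw [ih (t - L.length) h2]
      congr 1
      conv_rhs => rw [show t = t - L.length + L.length by omega]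
      rw [Nat.add_mod_right]

end AuxCycle

section AuxPackage

variable {B : Type u} [SmallCategory B] {I : MGraph.{u}}

lemma runE_flatten_replicate (D : GDiagram I (B ⥤ Type u)) (X : B) (L : List I.E) :
    ∀ (k : ℕ) (z : Elt D X),
      runE D X ((List.replicate k L).flatten) z = (runE D X L)^[k] z := by
  intro k
  induction k with
  | zero => intro z; rfl
  | succ k ih =>
    intro z
    rw [List.replicate_succ, List.flatten_cons, runE_append, ih,
      Function.iterate_succ_apply]

lemma cycle_package (D : GDiagram I (B ⥤ Type u))
    (n : ℕ) (hn : 1 ≤ n) (d : Fin n → I.E) (hinj : Function.Injective d)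
    (hcyc : ∀ k : Fin n, I.t (d k) = I.s (d (fcsucc (by omega) k)))
    (X : B)
    (hfin : Finite ((D.obj (I.s (d ⟨0, by omega⟩))).obj X))
    (hne : Nonempty ((D.obj (I.s (d ⟨0, by omega⟩))).obj X)) :
    ∃ (y : (D.obj (I.s (d ⟨0, by omega⟩))).obj X) (k : ℕ), 1 ≤ k ∧
      Evals D X ((List.replicate k (List.ofFn d)).flatten)
        ⟨I.s (d ⟨0, by omega⟩), y⟩ ⟨I.s (d ⟨0, by omega⟩), y⟩ ∧
      ∃ P : List (Seg D X), P ≠ [] ∧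
        IsMPath P ⟨I.s (d ⟨0, by omega⟩), y⟩ ⟨I.s (d ⟨0, by omega⟩), y⟩ ∧
        ProperPath P := by
  classical
  set i₀ : I.V := I.s (d ⟨0, by omega⟩) with hi₀
  set L : List I.E := List.ofFn d with hLdef
  have hLlen : L.length = n := by simp [hLdef]
  have hLne : L ≠ [] := by
    intro h
    rw [h] at hLlen
    simp at hLlen
    omega
  have hseq : IsEdgeSeq I L i₀ i₀ := isEdgeSeq_ofFn hn d hcyc
  set F : Elt D X → Elt D X := runE D X L with hFdef
  have hFv : ∀ z : Elt D X, z.1 = i₀ → (F z).1 = i₀ := fun z hz => (runE_spec hseq hz).1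
  have hIter : ∀ (r : ℕ) (z : Elt D X), z.1 = i₀ → (F^[r] z).1 = i₀ := by
    intro r
    induction r with
    | zero => intro z hz; exact hz
    | succ r ih =>
      intro z hz
      rw [Function.iterate_succ_apply]
      exact ih _ (hFv z hz)
  obtain ⟨y₀⟩ := hne
  set z₀ : Elt D X := ⟨i₀, y₀⟩ with hz₀
  haveI : Finite {z : Elt D X // z.1 = i₀} := by
    refine Finite.of_injective
      (fun p => (cast (congrArg (fun v => (D.obj v).obj X) p.2) p.1.2 : (D.obj i₀).obj X)) ?_
    rintro ⟨⟨a, x⟩, (ha : a = i₀)⟩ ⟨⟨b, y⟩, (hb : b = i₀)⟩ h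
    subst ha; subst hb
    have hxy : x = y := by simpa using h
    subst hxy
    rfl
  obtain ⟨a, b, hab, habeq⟩ := Finite.exists_ne_map_eq_of_infinite
    (fun r : ℕ => (⟨F^[r] z₀, hIter r z₀ rfl⟩ : {z : Elt D X // z.1 = i₀}))
  have habeq' : F^[a] z₀ = F^[b] z₀ := congrArg Subtype.val habeq
  -- wlog a < b
  have main : ∀ a b : ℕ, a < b → F^[a] z₀ = F^[b] z₀ →
      ∃ (y : (D.obj i₀).obj X) (k : ℕ), 1 ≤ k ∧
        Evals D X ((List.replicate k L).flatten) ⟨i₀, y⟩ ⟨i₀, y⟩ ∧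
        ∃ P : List (Seg D X), P ≠ [] ∧ IsMPath P ⟨i₀, y⟩ ⟨i₀, y⟩ ∧ ProperPath P := by
    clear hab habeq habeq' a b
    intro a b hab habeq
    set ζ : Elt D X := F^[a] z₀ with hζ
    have hper : F^[b - a] ζ = ζ := by
      rw [hζ, ← Function.iterate_add_apply, Nat.sub_add_cancel (le_of_lt hab), ← habeq]
    have hQ : ∃ k, 1 ≤ k ∧ F^[k] ζ = ζ := ⟨b - a, by omega, hper⟩
    set k₀ := Nat.find hQ with hk₀def
    obtain ⟨hk₀1, hk₀fix⟩ := Nat.find_spec hQ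
    rw [← hk₀def] at hk₀1 hk₀fix
    have hmin : ∀ m, m < k₀ → ¬(1 ≤ m ∧ F^[m] ζ = ζ) := fun m hm => Nat.find_min hQ hm
    have hζ1 : ζ.1 = i₀ := hIter a z₀ rfl
    obtain ⟨j₁, y⟩ := ζ
    rename_i hζeq
    have hj₁ : j₁ = i₀ := hζ1
    subst hj₁
    -- now the periodic point is ⟨i₀, y⟩
    set lN : List I.E := (List.replicate k₀ L).flatten with hlN
    have hlseq : IsEdgeSeq I lN i₀ i₀ := isEdgeSeq_flatten_replicate hseq k₀
    have hrun : runE D X lN ⟨i₀, y⟩ = ⟨i₀, y⟩ := by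
      erw [hlN, runE_flatten_replicate]
      exact hk₀fix
    have E1 : Evals D X lN ⟨i₀, y⟩ ⟨i₀, y⟩ := by
      have := (runE_spec hlseq (z := ⟨i₀, y⟩) rfl).2
      rwa [hrun] at this
    have hlNlen : lN.length = k₀ * n := by rw [hlN, length_flatten_replicate, hLlen]
    have hlNne : lN ≠ [] := by
      apply List.ne_nil_of_length_pos
      rw [hlNlen]
      exact Nat.mul_pos (by omega) (by omega)
    refine ⟨y, k₀, hk₀1, E1, segsOf D X lN ⟨i₀, y⟩, segsOf_ne_nil E1 hlNne,
      segsOf_isMPath E1, ?_⟩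
    refine properPath_of_nodup ?_ (segsOf_fwd E1)
    rw [List.nodup_iff_injective_get]
    have hnpos : 0 < n := by omega
    -- key asymmetric statement
    have key : ∀ (uv : Fin (segsOf D X lN ⟨i₀, y⟩).length ×
        Fin (segsOf D X lN ⟨i₀, y⟩).length), uv.1.1 < uv.2.1 →
        (segsOf D X lN ⟨i₀, y⟩).get uv.1 = (segsOf D X lN ⟨i₀, y⟩).get uv.2 → False := by
      rintro ⟨⟨t, htl⟩, ⟨t', ht'l⟩⟩ htt' hEq
      replace htt' : t < t' := htt'
      have ht : t < lN.length := by rw [← segsOf_length E1]; exact htl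
      have ht' : t' < lN.length := by rw [← segsOf_length E1]; exact ht'l
      obtain ⟨hedge, hsrc⟩ := segsOf_get E1 t ht
      obtain ⟨hedge', hsrc'⟩ := segsOf_get E1 t' ht'
      rw [hEq] at hedge hsrc
      rw [hedge'] at hedge
      rw [hsrc'] at hsrc
      -- edges equal
      have hmod : t % n = t' % n := by
        have e1 : lN.get ⟨t, ht⟩ = L[t % L.length]'(Nat.mod_lt _ (List.length_pos_iff.mpr hLne)) :=
          getElem_flatten_replicate L hLne k₀ t (by rw [hLlen, ← hlNlen]; exact ht)
        have e2 : lN.get ⟨t', ht'⟩ = L[t' % L.length]'(Nat.mod_lt _ (List.length_pos_iff.mpr hLne)) :=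
          getElem_flatten_replicate L hLne k₀ t' (by rw [hLlen, ← hlNlen]; exact ht')
        rw [e1, e2] at hedge
        have e3 : ∀ (s : ℕ) (hs : s < L.length),
            L[s]'hs = d ⟨s, hs.trans_le hLlen.le⟩ := by
          intro s hs
          rw [List.getElem_of_eq hLdef]
          exact List.getElem_ofFn (f := d) (i := s) (by simpa using hs.trans_le hLlen.le)
        rw [e3 _ _, e3 _ _] at hedge
        have h4 := congrArg Fin.val (hinj hedge)
        simp only [hLlen] at h4
        omega
      -- sources equal: the run analysis
      obtain ⟨q, jj, htdec, hjlt, hq, hjj⟩ :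
          ∃ q jj, q * n + jj = t ∧ jj < n ∧ q = t / n ∧ jj = t % n :=
        ⟨t / n, t % n, by rw [Nat.mul_comm]; exact Nat.div_add_mod t n, Nat.mod_lt _ hnpos,
          rfl, rfl⟩
      obtain ⟨q', ht'dec, hq'⟩ : ∃ q', q' * n + jj = t' ∧ q' = t' / n :=
        ⟨t' / n, by rw [hjj, hmod, Nat.mul_comm]; exact Nat.div_add_mod t' n, rfl⟩
      have hqlt : q < k₀ := by
        rw [hq, Nat.div_lt_iff_lt_mul hnpos]
        rw [hlNlen] at ht
        omega
      have hq'lt : q' < k₀ := by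
        rw [hq', Nat.div_lt_iff_lt_mul hnpos]
        rw [hlNlen] at ht'
        omega
      have hqq' : q < q' := by
        by_contra hcon
        push_neg at hcon
        have : q' * n ≤ q * n := Nat.mul_le_mul_right n hcon
        omega
      have htake : lN.take t = (List.replicate q L).flatten ++ L.take jj := by
        rw [hlN, ← htdec]
        have := take_flatten_replicate L q k₀ jj hqlt (by rw [hLlen]; omega)
        rw [hLlen] at this
        exact this
      have htake' : lN.take t' = (List.replicate q' L).flatten ++ L.take jj := by
        rw [hlN, ← ht'dec]
        have := take_flatten_replicate L q' k₀ jj hq'lt (by rw [hLlen]; omega)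
        rw [hLlen] at this
        exact this
      rw [htake, htake'] at hsrc
      erw [runE_append, runE_append, runE_flatten_replicate, runE_flatten_replicate] at hsrc
      -- apply runE (L.drop jj) to both sides
      have hsrc2 : F (F^[q'] ⟨i₀, y⟩) = F (F^[q] ⟨i₀, y⟩) := by
        have h5 := congrArg (runE D X (L.drop jj)) hsrc
        rw [← runE_append, ← runE_append, List.take_append_drop] at h5
        exact h5
      have hsrc3 : F^[q' + 1] ⟨i₀, y⟩ = F^[q + 1] ⟨i₀, y⟩ := by
        erw [Function.iterate_succ_apply', Function.iterate_succ_apply']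
        exact hsrc2
      have hsrc4 := congrArg (F^[k₀ - 1 - q']) hsrc3
      erw [← Function.iterate_add_apply, ← Function.iterate_add_apply] at hsrc4
      have harith1 : k₀ - 1 - q' + (q' + 1) = k₀ := by omega
      have harith2 : k₀ - 1 - q' + (q + 1) = k₀ - (q' - q) := by omega
      rw [harith1, harith2, hk₀fix] at hsrc4
      exact hmin (k₀ - (q' - q)) (by omega) ⟨by omega, hsrc4.symm⟩
    intro u v huv
    by_contra hne
    rcases lt_trichotomy u.1 v.1 with h | h | h
    · exact key (u, v) h huv
    · exact hne (Fin.ext h)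
    · exact key (v, u) h huv.symm
  rcases Nat.lt_or_ge a b with h | h
  · exact main a b h habeq'
  · exact main b a (by omega) habeq'.symm

end AuxPackage

section AuxVK

variable {B : Type u} [SmallCategory B]

lemma isPullback_app_inj {P Q R S : B ⥤ Type u} {f : P ⟶ Q} {g : P ⟶ R} {h : Q ⟶ S}
    {i : R ⟶ S} (hpb : IsPullback f g h i) (Y : B) :
    ∀ a b : P.obj Y, f.app Y a = f.app Y b → g.app Y a = g.app Y b → a = b := by
  intro a b hf hg
  have hpb' := hpb.map ((evaluation B (Type u)).obj Y)
  exact PullbackCone.IsLimit.type_ext hpb'.isLimit hf hg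

lemma isPullback_app_surj {P Q R S : B ⥤ Type u} {f : P ⟶ Q} {g : P ⟶ R} {h : Q ⟶ S}
    {i : R ⟶ S} (hpb : IsPullback f g h i) (Y : B) :
    ∀ (q : Q.obj Y) (r : R.obj Y), h.app Y q = i.app Y r →
      ∃ a, f.app Y a = q ∧ g.app Y a = r := by
  intro q r hw
  have hpb' := hpb.map ((evaluation B (Type u)).obj Y)
  refine ⟨(PullbackCone.IsLimit.equivPullbackObj hpb'.isLimit).symm ⟨(q, r), hw⟩, ?_, ?_⟩
  · exact PullbackCone.IsLimit.equivPullbackObj_symm_apply_fst hpb'.isLimit _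
  · exact PullbackCone.IsLimit.equivPullbackObj_symm_apply_snd hpb'.isLimit _

lemma isPullback_of_pointwise {P Q R S : B ⥤ Type u} {f : P ⟶ Q} {g : P ⟶ R} {h : Q ⟶ S}
    {i : R ⟶ S} (w : f ≫ h = g ≫ i)
    (hinj : ∀ (Y : B) (a b : P.obj Y), f.app Y a = f.app Y b → g.app Y a = g.app Y b → a = b)
    (hsurj : ∀ (Y : B) (q : Q.obj Y) (r : R.obj Y), h.app Y q = i.app Y r →
      ∃ a, f.app Y a = q ∧ g.app Y a = r) :
    IsPullback f g h i := by
  refine IsPullback.of_isLimit (c := PullbackCone.mk f g w)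
    (evaluationJointlyReflectsLimits _ (fun Y => ?_))
  refine (PullbackCone.isLimitMapConeEquiv (PullbackCone.mk f g w)
    ((evaluation B (Type u)).obj Y)).symm ((PullbackCone.isLimitEquivBijective _).symm ?_)
  constructor
  · intro a b hab
    exact hinj Y a b (congrArg (fun p => p.1.1) hab) (congrArg (fun p => p.1.2) hab)
  · rintro ⟨⟨q, r⟩, hw⟩
    obtain ⟨a, ha1, ha2⟩ := hsurj Y q r hw
    exact ⟨a, Subtype.ext (Prod.ext ha1 ha2)⟩

/-- The covariant hom functor. -/
def CoY (X : B) : B ⥤ Type u where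
  obj Y := X ⟶ Y
  map χ := TypeCat.ofHom fun ψ => ψ ≫ χ
  map_id := by intro Y; refine ConcreteCategory.hom_ext _ _ fun ψ => ?_; simp
  map_comp := by intros; refine ConcreteCategory.hom_ext _ _ fun ψ => ?_; simp

/-- The natural transformation out of `CoY X` determined by an element. -/
def elNat {X : B} {W : B ⥤ Type u} (u : W.obj X) : CoY X ⟶ W where
  app Y := TypeCat.ofHom fun ψ => W.map ψ u
  naturality := by
    intro Y Y' χ
    refine ConcreteCategory.hom_ext _ _ fun ψ => ?_
    show W.map (ψ ≫ χ) u = W.map χ (W.map ψ u)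
    exact Functor.map_comp_apply W ψ χ u

@[simp] lemma elNat_app_id {X : B} {W : B ⥤ Type u} (u : W.obj X) :
    (elNat u).app X (𝟙 X) = u := by simp [elNat]

/-- Iterated composition of an endomorphism. -/
def powHom {X : B} (φ : X ⟶ X) : ℕ → (X ⟶ X)
  | 0 => 𝟙 X
  | r + 1 => powHom φ r ≫ φ

lemma powHom_add {X : B} (φ : X ⟶ X) (a b : ℕ) :
    powHom φ (a + b) = powHom φ a ≫ powHom φ b := by
  induction b with
  | zero => simp [powHom]
  | succ b ih => rw [← Nat.add_assoc]; simp [powHom, ih]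

variable {I : MGraph.{u}}

/-- Component functors of the ℤ-twisted covering of `D`. -/
def Pz (D : GDiagram I (B ⥤ Type u)) (i : I.V) : B ⥤ Type u where
  obj Y := (D.obj i).obj Y × ULift.{u} ℤ
  map χ := TypeCat.ofHom fun p => ((D.obj i).map χ p.1, p.2)
  map_id := by intro Y; refine ConcreteCategory.hom_ext _ _ fun p => ?_; simp
  map_comp := by intros; refine ConcreteCategory.hom_ext _ _ fun p => ?_; simp [FunctorToTypes.map_comp_apply]

/-- Edge maps of the ℤ-twisted covering of `D`. -/
def PzMap (D : GDiagram I (B ⥤ Type u)) (e : I.E) : Pz D (I.s e) ⟶ Pz D (I.t e) where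
  app Y := TypeCat.ofHom fun p => ((D.map e).app Y p.1, ⟨p.2.down + 1⟩)
  naturality := by
    intro Y Y' χ
    refine ConcreteCategory.hom_ext _ _ fun p => ?_
    dsimp [Pz]
    exact Prod.ext (NatTrans.naturality_apply _ _ _) rfl

/-- Projection of the ℤ-twisted covering to `D`. -/
def PzFst (D : GDiagram I (B ⥤ Type u)) (i : I.V) : Pz D i ⟶ D.obj i where
  app Y := TypeCat.ofHom fun p => p.1
  naturality := by intros; rfl

/-- The ℤ-twisted covering of `D`, as an object of the category of cartesian
transformations into `D`. -/
def EObj (D : GDiagram I (B ⥤ Type u)) : CartObj D where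
  diag := ⟨Pz D, PzMap D⟩
  hom := ⟨PzFst D, by intro e; rfl⟩
  cart := by
    intro e
    refine isPullback_of_pointwise rfl ?_ ?_
    · intro Y a b h1 h2
      refine Prod.ext h2 ?_
      have := congrArg (fun p => p.2.down) h1
      simp only [PzMap, TypeCat.ofHom_apply] at this
      change a.2.down + 1 = b.2.down + 1 at this
      exact ULift.ext _ _ (by omega)
    · intro Y p q hw
      refine ⟨(q, ⟨p.2.down - 1⟩), ?_, rfl⟩
      dsimp [PzMap, PzFst] at hw ⊢
      refine Prod.ext hw.symm (ULift.ext _ _ (by show p.2.down - 1 + 1 = p.2.down; omega))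

end AuxVK

section AuxNotVK

variable {B : Type u} [SmallCategory B] {I : MGraph.{u}}

lemma not_vanKampen_of_loop {D : GDiagram I (B ⥤ Type u)} (c : GCocone D) {X : B}
    {l : List I.E} {z : Elt D X} (hl : l ≠ []) (hE : Evals D X l z z)
    (hfin : Finite ((D.obj z.1).obj X)) : ¬ c.IsVanKampen := by
  classical
  obtain ⟨i₀, y⟩ := z
  rintro ⟨F, π, hpb, hnat, hequiv⟩
  -- pointwise consequences of the pullback squares
  have PBinj := fun (σ : Over c.pt) (i : I.V) => isPullback_app_inj (hpb σ i) X
  have PBsurj := fun (σ : Over c.pt) (i : I.V) => isPullback_app_surj (hpb σ i) X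
  have PBw : ∀ (σ : Over c.pt) (i : I.V) (α : ((F.obj σ).diag.obj i).obj X),
      σ.hom.app X ((π σ i).app X α) = (c.leg i).app X (((F.obj σ).hom.app i).app X α) := by
    intro σ i α
    have h0 := (hpb σ i).w
    have h1 := congrFun (congrArg (fun (m : _ ⟶ c.pt) => ⇑(m.app X)) h0) α
    simpa using h1
  -- the "generic element" lemma
  have Agen : ∀ (e : I.E) (x : (D.obj (I.s e)).obj X),
      ∃ φ : X ⟶ X, ∀ (σ : Over c.pt) (α : ((F.obj σ).diag.obj (I.s e)).obj X),
        ((F.obj σ).hom.app (I.s e)).app X α = x →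
        (π σ (I.t e)).app X (((F.obj σ).diag.map e).app X α)
          = σ.left.map φ ((π σ (I.s e)).app X α) := by
    intro e x
    set ρ : Over c.pt := Over.mk (elNat ((c.leg (I.s e)).app X x)) with hρ
    obtain ⟨a₀, ha₀π, ha₀hom⟩ := PBsurj ρ (I.s e) (𝟙 X) x (by
      show (elNat ((c.leg (I.s e)).app X x)).app X (𝟙 X) = _
      simp)
    set φ : X ⟶ X := (π ρ (I.t e)).app X (((F.obj ρ).diag.map e).app X a₀) with hφ
    refine ⟨φ, ?_⟩
    intro σ α hα
    set u := (π σ (I.s e)).app X α with hu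
    have hsu : σ.hom.app X u = (c.leg (I.s e)).app X x := by
      rw [hu, PBw σ (I.s e) α, hα]
    have htri : elNat u ≫ σ.hom = ρ.hom := by
      apply NatTrans.ext
      funext Y; refine ConcreteCategory.hom_ext _ _ fun ψ => ?_
      show σ.hom.app Y (σ.left.map ψ u) = (c.pt).map ψ ((c.leg (I.s e)).app X x)
      rw [NatTrans.naturality_apply σ.hom ψ u, hsu]
    set γ : ρ ⟶ σ := Over.homMk (elNat u) htri with hγ
    have hγleft : γ.left = elNat u := rfl
    have hγhom := (F.map γ).2
    have hγπ := fun (i : I.V) => hnat γ i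
    have hb₀ : ((F.map γ).1.app (I.s e)).app X a₀ = α := by
      apply PBinj σ (I.s e)
      · have h2 := congrFun (congrArg (fun (m : _ ⟶ σ.left) => ⇑(m.app X)) (hγπ (I.s e))) a₀
        simp only [FunctorToTypes.comp] at h2
        rw [h2, ha₀π, hγleft]
        show σ.left.map (𝟙 X) u = u
        simp
      · have h2 := congrFun (congrArg (fun (m : _ ⟶ D.obj (I.s e)) => ⇑(m.app X))
          (hγhom (I.s e))) a₀
        simp only [FunctorToTypes.comp] at h2
        rw [h2, ha₀hom, hα]
    have hnat2 := (F.map γ).1.naturality e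
    have h3 : ((F.map γ).1.app (I.t e)).app X (((F.obj ρ).diag.map e).app X a₀)
        = ((F.obj σ).diag.map e).app X α := by
      have h4 := congrFun (congrArg (fun (m : _ ⟶ (F.obj σ).diag.obj (I.t e)) => ⇑(m.app X))
        hnat2) a₀
      simp only [FunctorToTypes.comp] at h4
      rw [h4, hb₀]
    have h5 := congrFun (congrArg (fun (m : _ ⟶ σ.left) => ⇑(m.app X)) (hγπ (I.t e)))
      (((F.obj ρ).diag.map e).app X a₀)
    simp only [FunctorToTypes.comp] at h5
    rw [h3] at h5
    rw [h5, ← hφ, hγleft]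
    rfl
  -- the monodromy lemma
  have M : ∀ (l' : List I.E) (za zb : Elt D X), Evals D X l' za zb →
      ∃ Φ : X ⟶ X, ∀ (σ : Over c.pt) (α : ((F.obj σ).diag.obj za.1).obj X),
        ((F.obj σ).hom.app za.1).app X α = za.2 →
        ∃ β : ((F.obj σ).diag.obj zb.1).obj X,
          Evals (F.obj σ).diag X l' ⟨za.1, α⟩ ⟨zb.1, β⟩ ∧
          ((F.obj σ).hom.app zb.1).app X β = zb.2 ∧
          (π σ zb.1).app X β = σ.left.map Φ ((π σ za.1).app X α) := by
    intro l' za zb hev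
    induction hev with
    | nil zc => exact ⟨𝟙 X, fun σ α hα => ⟨α, Evals.nil _, hα, by simp⟩⟩
    | cons e yy hev ih =>
      obtain ⟨φ, hφ⟩ := Agen e yy
      obtain ⟨Φ', hΦ'⟩ := ih
      refine ⟨φ ≫ Φ', ?_⟩
      intro σ α hα
      have hα'hom : ((F.obj σ).hom.app (I.t e)).app X (((F.obj σ).diag.map e).app X α)
          = (D.map e).app X yy := by
        have h0 := (F.obj σ).hom.naturality e
        have h1 := congrFun (congrArg (fun (m : _ ⟶ D.obj (I.t e)) => ⇑(m.app X)) h0) α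
        simp only [FunctorToTypes.comp] at h1
        rw [h1, hα]
      obtain ⟨β, hβev, hβhom, hβπ⟩ := hΦ' σ _ hα'hom
      refine ⟨β, Evals.cons e α hβev, hβhom, ?_⟩
      rw [hβπ, hφ σ α hα, ← FunctorToTypes.map_comp_apply]
  -- instantiate with the twisted covering
  haveI := hequiv
  set σ : Over c.pt := F.objPreimage (EObj D) with hσ
  set χ : F.obj σ ≅ EObj D := F.objObjPreimageIso (EObj D) with hχ
  have hχid : ∀ (i : I.V) (a : ((F.obj σ).diag.obj i).obj X),
      (χ.inv.1.app i).app X ((χ.hom.1.app i).app X a) = a := by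
    intro i a
    exact congrFun (congrArg (fun (m : F.obj σ ⟶ F.obj σ) => ⇑((m.1.app i).app X)) χ.hom_inv_id) a
  have hhomχ : ∀ (i : I.V) (a : ((F.obj σ).diag.obj i).obj X),
      ((χ.hom.1.app i).app X a).1 = ((F.obj σ).hom.app i).app X a := by
    intro i a
    exact congrFun (congrArg (fun (m : _ ⟶ D.obj i) => ⇑(m.app X)) (χ.hom.2 i)) a
  set βv : ∀ i : I.V, ((F.obj σ).diag.obj i).obj X → ℤ :=
    fun i a => ((χ.hom.1.app i).app X a).2.down with hβv
  have hβstep : ∀ (e : I.E) (a : ((F.obj σ).diag.obj (I.s e)).obj X),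
      βv (I.t e) (((F.obj σ).diag.map e).app X a) = βv (I.s e) a + 1 := by
    intro e a
    have h0 := χ.hom.1.naturality e
    have h1 := congrFun (congrArg (fun (m : _ ⟶ Pz D (I.t e)) => ⇑(m.app X)) h0) a
    simp only [FunctorToTypes.comp] at h1
    have h2 := congrArg (fun p => p.2.down) h1
    exact h2
  have hβev : ∀ (l' : List I.E) (aσ bσ : Elt (F.obj σ).diag X),
      Evals (F.obj σ).diag X l' aσ bσ →
      βv bσ.1 bσ.2 = βv aσ.1 aσ.2 + l'.length := by
    intro l' aσ bσ h
    induction h with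
    | nil => simp
    | cons e a h ih =>
      rw [ih, hβstep e a]
      simp only [List.length_cons]
      push_cast
      ring
  -- B-naturality facts
  have hnatπ : ∀ (ψ : X ⟶ X) (i : I.V) (a : ((F.obj σ).diag.obj i).obj X),
      (π σ i).app X (((F.obj σ).diag.obj i).map ψ a) = σ.left.map ψ ((π σ i).app X a) :=
    fun ψ i a => NatTrans.naturality_apply (π σ i) ψ a
  have hnathom : ∀ (ψ : X ⟶ X) (i : I.V) (a : ((F.obj σ).diag.obj i).obj X),
      ((F.obj σ).hom.app i).app X (((F.obj σ).diag.obj i).map ψ a)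
        = (D.obj i).map ψ (((F.obj σ).hom.app i).app X a) :=
    fun ψ i a => NatTrans.naturality_apply ((F.obj σ).hom.app i) ψ a
  have hnatβ : ∀ (ψ : X ⟶ X) (i : I.V) (a : ((F.obj σ).diag.obj i).obj X),
      βv i (((F.obj σ).diag.obj i).map ψ a) = βv i a := by
    intro ψ i a
    have h0 := NatTrans.naturality_apply (χ.hom.1.app i) ψ a
    have h1 : ((χ.hom.1.app i).app X (((F.obj σ).diag.obj i).map ψ a)).2
        = ((χ.hom.1.app i).app X a).2 := by rw [h0]; rfl
    exact congrArg ULift.down h1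
  -- base point α₀ over y
  set α₀ : ((F.obj σ).diag.obj i₀).obj X := (χ.inv.1.app i₀).app X (y, ⟨0⟩) with hα₀
  have hα₀hom : ((F.obj σ).hom.app i₀).app X α₀ = y := by
    have h0 := congrFun (congrArg (fun (m : _ ⟶ D.obj i₀) => ⇑(m.app X)) (χ.inv.2 i₀)) (y, (⟨0⟩ : ULift ℤ))
    exact h0
  set u₀ := (π σ i₀).app X α₀ with hu₀
  -- the monodromy endomorphism
  obtain ⟨Φ, hΦM⟩ := M l ⟨i₀, y⟩ ⟨i₀, y⟩ hE
  -- the sequence of iterates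
  have seq : ∀ r : ℕ, ∃ α : ((F.obj σ).diag.obj i₀).obj X,
      ((F.obj σ).hom.app i₀).app X α = y ∧
      (π σ i₀).app X α = σ.left.map (powHom Φ r) u₀ ∧
      βv i₀ α = βv i₀ α₀ + r * l.length := by
    intro r
    induction r with
    | zero =>
      refine ⟨α₀, hα₀hom, ?_, by simp⟩
      show u₀ = σ.left.map (𝟙 X) u₀
      simp
    | succ r ih =>
      obtain ⟨αr, h1, h2, h3⟩ := ih
      obtain ⟨β, hβev', hβhom, hβπ⟩ := hΦM σ αr h1
      refine ⟨β, hβhom, ?_, ?_⟩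
      · rw [hβπ, h2, ← FunctorToTypes.map_comp_apply]
        rfl
      · rw [hβev l _ _ hβev', h3]
        push_cast
        ring
  -- pigeonhole
  have main2 : ∀ r r' : ℕ, r < r' →
      (D.obj i₀).map (powHom Φ r) y = (D.obj i₀).map (powHom Φ r') y → False := by
    intro r r' hrr' hyy
    set αp := ((F.obj σ).diag.obj i₀).map (powHom Φ r) α₀ with hαp
    have hαphom : ((F.obj σ).hom.app i₀).app X αp = (D.obj i₀).map (powHom Φ r) y := by
      rw [hαp, hnathom, hα₀hom]
    have h1 : ((F.obj σ).diag.obj i₀).map (powHom Φ (r' - r)) αp = αp := by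
      -- both sides have the same image under χ.hom
      have hfst : ((F.obj σ).hom.app i₀).app X (((F.obj σ).diag.obj i₀).map (powHom Φ (r' - r)) αp)
          = ((F.obj σ).hom.app i₀).app X αp := by
        rw [hnathom, hαphom, ← FunctorToTypes.map_comp_apply, ← powHom_add,
          Nat.add_sub_cancel' (le_of_lt hrr'), ← hyy]
      have hsnd : βv i₀ (((F.obj σ).diag.obj i₀).map (powHom Φ (r' - r)) αp) = βv i₀ αp :=
        hnatβ _ _ _
      have hprod : (χ.hom.1.app i₀).app X (((F.obj σ).diag.obj i₀).map (powHom Φ (r' - r)) αp)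
          = (χ.hom.1.app i₀).app X αp := by
        refine Prod.ext ?_ (ULift.ext _ _ ?_)
        · rw [hhomχ, hhomχ, hfst]
        · exact hsnd
      have := congrArg ((χ.inv.1.app i₀).app X) hprod
      rwa [hχid, hχid] at this
    have h2 : σ.left.map (powHom Φ (r' - r)) ((π σ i₀).app X αp) = (π σ i₀).app X αp := by
      have h0 := congrArg ((π σ i₀).app X) h1
      rwa [hnatπ] at h0
    have h3 : (π σ i₀).app X αp = σ.left.map (powHom Φ r) u₀ := by
      rw [hαp, hnatπ]
    have h4 : σ.left.map (powHom Φ r') u₀ = σ.left.map (powHom Φ r) u₀ := by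
      rw [show r' = r + (r' - r) by omega, powHom_add, FunctorToTypes.map_comp_apply, ← h3, h2, h3]
    obtain ⟨αr, har1, har2, har3⟩ := seq r
    obtain ⟨αr', har1', har2', har3'⟩ := seq r'
    have h5 : αr' = αr := by
      apply PBinj σ i₀
      · rw [har2, har2', h4]
      · rw [har1, har1']
    rw [h5, har3] at har3'
    have hlen : 0 < l.length := List.length_pos_iff.mpr hl
    have hC : (r' : ℤ) * l.length = r * l.length := by linarith
    have hr' : (r' : ℤ) = r :=
      mul_right_cancel₀ (by exact_mod_cast hlen.ne' : (l.length : ℤ) ≠ 0) hC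
    have : r' = r := by exact_mod_cast hr'
    omega
  obtain ⟨r1, r2, hr12, hyr⟩ := Finite.exists_ne_map_eq_of_infinite
    (fun r : ℕ => (D.obj i₀).map (powHom Φ r) y)
  rcases Nat.lt_or_ge r1 r2 with h | h
  · exact main2 r1 r2 h hyr
  · exact main2 r2 r1 (by omega) hyr.symm

end AuxNotVK

/-- **Directed cycles with a finite component violate VK** (Sect. 6.2).  If `I`
contains a directed cycle `p = (i₀ →^{d₀} i₁ → … → iₙ = i₀)` and for some sort `X`
the set `D_{i₀}(X)` is finite and non-empty, then the colimiting cocone `κ` is not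
Van Kampen: there are `y ∈ D_{i₀}(X)` and `k ≥ 1` with `D_p^k(y) = y`, giving a
non-empty proper mapping path of sort `X` connecting `y` with itself, which together
with the empty path gives two different proper mapping paths from `y` to `y`. -/
theorem directedCycle_not_vanKampen
    {B : Type u} [SmallCategory B] {I : MGraph.{u}} [Finite I.V] [Finite I.E]
    (D : GDiagram I (B ⥤ Type u)) (c : GCocone D) (hc : c.IsColimit)
    (n : ℕ) (hn : 1 ≤ n) (d : Fin n → I.E) (hinj : Function.Injective d)
    (hcyc : ∀ k : Fin n, I.t (d k) = I.s (d (fcsucc (by omega) k)))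
    (X : B)
    (hfin : Finite ((D.obj (I.s (d ⟨0, by omega⟩))).obj X))
    (hne : Nonempty ((D.obj (I.s (d ⟨0, by omega⟩))).obj X)) :
    ¬ c.IsVanKampen ∧
      ∃ (y : (D.obj (I.s (d ⟨0, by omega⟩))).obj X) (k : ℕ), 1 ≤ k ∧
        Evals D X ((List.replicate k (List.ofFn d)).flatten)
          ⟨I.s (d ⟨0, by omega⟩), y⟩ ⟨I.s (d ⟨0, by omega⟩), y⟩ ∧
        ∃ P : List (Seg D X), P ≠ [] ∧
          IsMPath P ⟨I.s (d ⟨0, by omega⟩), y⟩ ⟨I.s (d ⟨0, by omega⟩), y⟩ ∧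
          ProperPath P := by
  obtain ⟨y, k, hk1, hEv, P, hPne, hPmp, hPproper⟩ :=
    cycle_package D n hn d hinj hcyc X hfin hne
  refine ⟨?_, y, k, hk1, hEv, P, hPne, hPmp, hPproper⟩
  refine not_vanKampen_of_loop c ?_ hEv hfin
  apply List.ne_nil_of_length_pos
  rw [length_flatten_replicate]
  have : (List.ofFn d).length = n := by simp
  rw [this]
  exact Nat.mul_pos (by omega) (by omega)
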